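/- Lemma (Lemma 4.1, disjointness of deformed ABHY realizations for distinct cosets): Let n ≥ 4 and fix the fan reference triangulation T = {(0, j) : 2 ≤ j ≤ n−2}. For any two permutations σ₁, σ₂ of Fin n lying in distinct cosets of the dihedral subgroup D (i.e. σ₂⁻¹σ₁ ∉ D), there exist σ ∈ σ₁·D and σ' ∈ σ₂·D such that for every choice of families of positive constants c and c', the deformed ABHY associahedra A^{T,σ}(c) and A^{T,σ'}(c') are disjoint subsets of the space of massless kinematic configurations. -/

import Mathlib

/-- An `n`-point massless kinematic configuration: symmetric, vanishing diagonal,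
and momentum conservation `∑ j, w i j = 0`. -/
def IsKinematic {n : ℕ} (w : Fin n → Fin n → ℝ) : Prop :=
  (∀ i j, w i j = w j i) ∧ (∀ i, w i i = 0) ∧ (∀ i, ∑ j, w i j = 0)

/-- The Mandelstam invariant `s_w(I) = ∑_{{i,j} ⊆ I, i ≠ j} w i j`
(sum over unordered pairs of distinct elements of `I`). -/
noncomputable def mandelstam {n : ℕ} (w : Fin n → Fin n → ℝ) (I : Finset (Fin n)) : ℝ :=
  ∑ i ∈ I, ∑ j ∈ I, if i < j then w i j else 0

/-- A diagonal of the `n`-gon: a pair `(i, j)` with `i + 2 ≤ j` and `(i,j) ≠ (0, n-1)`. -/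
def IsDiagonal {n : ℕ} (d : Fin n × Fin n) : Prop :=
  d.1.val + 2 ≤ d.2.val ∧ ¬(d.1.val = 0 ∧ d.2.val = n - 1)

/-- The arc of a diagonal `(i, j)`: the subset `{i, i+1, …, j-1}` of `Fin n`. -/
def arcOf {n : ℕ} (d : Fin n × Fin n) : Finset (Fin n) :=
  Finset.univ.filter (fun k => d.1.val ≤ k.val ∧ k.val < d.2.val)

/-- The rotated fan triangulation `T^c = {(i, n-1) : 1 ≤ i ≤ n-3}`. -/
def fanTc (n : ℕ) : Set (Fin n × Fin n) :=
  { d | d.2.val = n - 1 ∧ 1 ≤ d.1.val ∧ d.1.val ≤ n - 3 }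

/-- The deformed ABHY associahedron `A^{T,σ}(c)` (for the fan reference triangulation
`T = {(0,j) : 2 ≤ j ≤ n-2}`): the set of massless kinematic configurations with
`s_w(σ(arc(i,j))) ≥ 0` for every diagonal `(i,j)` and `w(σ i)(σ j) = -c_{ij}` for every
diagonal `(i,j) ∉ T^c`. -/
def deformedAssociahedron {n : ℕ} (σ : Equiv.Perm (Fin n)) (c : Fin n × Fin n → ℝ) :
    Set (Fin n → Fin n → ℝ) :=
  { w | IsKinematic w ∧
      (∀ d : Fin n × Fin n, IsDiagonal d → 0 ≤ mandelstam w ((arcOf d).image σ)) ∧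
      (∀ d : Fin n × Fin n, IsDiagonal d → d ∉ fanTc n → w (σ d.1) (σ d.2) = - c d) }

/-- The dihedral subgroup of `Perm (Fin n)`, generated by the rotation `i ↦ i + 1`
(mod `n`) and the reflection `i ↦ -i` (mod `n`). -/
def dihedral (n : ℕ) [NeZero n] : Subgroup (Equiv.Perm (Fin n)) :=
  Subgroup.closure {Equiv.addRight (1 : Fin n), Equiv.neg (Fin n)}

/-- Lemma 4.1: for permutations `σ₁, σ₂` in distinct cosets of the dihedral subgroup,
there are representatives `σ ∈ σ₁·D` and `σ' ∈ σ₂·D` such that the corresponding deformed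
ABHY associahedra are disjoint, for every choice of positive constants. -/
private lemma pair_mandelstam {n : ℕ} (w : Fin n → Fin n → ℝ)
    (hsymm : ∀ i j, w i j = w j i) {a b : Fin n} (hab : a ≠ b) :
    mandelstam w {a, b} = w a b := by
  unfold mandelstam
  rw [Finset.sum_pair hab, Finset.sum_pair hab, Finset.sum_pair hab]
  rcases hab.lt_or_gt with hlt | hlt
  · rw [if_pos hlt, if_neg (lt_irrefl a), if_neg (lt_irrefl b), if_neg (asymm hlt)]
    ring
  · rw [if_neg (asymm hlt), if_neg (lt_irrefl a), if_neg (lt_irrefl b), if_pos hlt,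
      hsymm b a]
    ring

open Fin.NatCast Fin.CommRing in
private lemma addRight_pow (n : ℕ) [NeZero n] (k : ℕ) :
    (Equiv.addRight (1 : Fin n)) ^ k = Equiv.addRight ((k : Fin n)) := by
  induction k with
  | zero => ext x; simp
  | succ k ih =>
    ext x
    rw [pow_succ, Equiv.Perm.mul_apply, ih]
    simp only [Equiv.coe_addRight]
    push_cast
    ring

private lemma addRight_mem_dihedral (n : ℕ) [NeZero n] (t : Fin n) :
    Equiv.addRight t ∈ dihedral n := by
  have h : Equiv.addRight t = (Equiv.addRight (1 : Fin n)) ^ t.val := by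
    rw [addRight_pow, Fin.cast_val_eq_self]
  rw [h]
  exact pow_mem (Subgroup.subset_closure (by simp)) _

private lemma neg_mem_dihedral (n : ℕ) [NeZero n] :
    Equiv.neg (Fin n) ∈ dihedral n :=
  Subgroup.subset_closure (by simp)

open Fin.NatCast Fin.CommRing in
theorem deformed_associahedra_disjoint (n : ℕ) [NeZero n] (hn : 4 ≤ n)
    (σ₁ σ₂ : Equiv.Perm (Fin n)) (h : σ₂⁻¹ * σ₁ ∉ dihedral n) :
    ∃ σ σ' : Equiv.Perm (Fin n), σ₁⁻¹ * σ ∈ dihedral n ∧ σ₂⁻¹ * σ' ∈ dihedral n ∧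
      ∀ c c' : Fin n × Fin n → ℝ,
        (∀ d : Fin n × Fin n, IsDiagonal d → d ∉ fanTc n → 0 < c d) →
        (∀ d : Fin n × Fin n, IsDiagonal d → d ∉ fanTc n → 0 < c' d) →
        deformedAssociahedron σ c ∩ deformedAssociahedron σ' c' = ∅ := by
  obtain ⟨m, rfl⟩ : ∃ m, n = m + 4 := ⟨n - 4, by omega⟩
  set N : Fin (m + 4) := ⟨m + 3, by omega⟩ with hNdef
  set t : Fin (m + 4) := σ₂.symm (σ₁ N) - N with htdef
  refine ⟨σ₁, σ₂ * Equiv.addRight t, ?_, ?_, ?_⟩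
  · rw [inv_mul_cancel]; exact (dihedral _).one_mem
  · rw [← mul_assoc, inv_mul_cancel, one_mul]
    exact addRight_mem_dihedral _ t
  intro c c' hc hc'
  set σ' : Equiv.Perm (Fin (m + 4)) := σ₂ * Equiv.addRight t with hσ'def
  rw [Set.eq_empty_iff_forall_notMem]
  rintro w ⟨⟨⟨hsymm, hdiag, hmom⟩, hge, heqc⟩, ⟨hkin', hge', heqc'⟩⟩
  -- σ' agrees with σ₁ on the last index
  have hσ'app : ∀ x, σ' x = σ₂ (x + t) := by
    intro x
    rw [hσ'def, Equiv.Perm.mul_apply, Equiv.coe_addRight]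
  have hlast : σ' N = σ₁ N := by
    rw [hσ'app]
    have hNt : N + t = σ₂.symm (σ₁ N) := by rw [htdef]; ring
    rw [hNt, Equiv.apply_symm_apply]
  -- nonnegativity of adjacent pairs
  have nonneg : ∀ τ : Equiv.Perm (Fin (m + 4)),
      (∀ d : Fin (m + 4) × Fin (m + 4), IsDiagonal d →
        0 ≤ mandelstam w ((arcOf d).image τ)) →
      ∀ i : ℕ, ∀ hi : i + 2 < m + 4,
        0 ≤ w (τ ⟨i, by omega⟩) (τ ⟨i + 1, by omega⟩) := by
    intro τ hge0 i hi
    have hd : IsDiagonal ((⟨i, by omega⟩ : Fin (m + 4)), (⟨i + 2, hi⟩ : Fin (m + 4))) := by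
      show i + 2 ≤ i + 2 ∧ ¬(i = 0 ∧ i + 2 = m + 4 - 1)
      omega
    have harc : arcOf ((⟨i, by omega⟩ : Fin (m + 4)), (⟨i + 2, hi⟩ : Fin (m + 4)))
        = ({⟨i, by omega⟩, ⟨i + 1, by omega⟩} : Finset (Fin (m + 4))) := by
      ext k
      simp only [arcOf, Finset.mem_filter, Finset.mem_univ, true_and, Finset.mem_insert,
        Finset.mem_singleton, Fin.ext_iff, Fin.val_mk]
      omega
    have hne : (⟨i, by omega⟩ : Fin (m + 4)) ≠ ⟨i + 1, by omega⟩ := by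
      simp [Fin.ext_iff]
    have hkey := hge0 _ hd
    rwa [harc, Finset.image_insert, Finset.image_singleton,
      pair_mandelstam w hsymm (fun hEq => hne (τ.injective hEq))] at hkey
  -- negativity of distant pairs among the first m+3 vertices
  have neg : ∀ (τ : Equiv.Perm (Fin (m + 4))) (cc : Fin (m + 4) × Fin (m + 4) → ℝ),
      (∀ d : Fin (m + 4) × Fin (m + 4), IsDiagonal d → d ∉ fanTc (m + 4) →
        w (τ d.1) (τ d.2) = - cc d) →
      (∀ d : Fin (m + 4) × Fin (m + 4), IsDiagonal d → d ∉ fanTc (m + 4) → 0 < cc d) →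
      ∀ p q : ℕ, ∀ hpq : p + 2 ≤ q, ∀ hq : q + 2 ≤ m + 4,
        w (τ ⟨p, by omega⟩) (τ ⟨q, by omega⟩) < 0 := by
    intro τ cc heq hpos p q hpq hq
    have hd : IsDiagonal ((⟨p, by omega⟩ : Fin (m + 4)), (⟨q, by omega⟩ : Fin (m + 4))) := by
      show p + 2 ≤ q ∧ ¬(p = 0 ∧ q = m + 4 - 1)
      omega
    have hTc : ((⟨p, by omega⟩ : Fin (m + 4)), (⟨q, by omega⟩ : Fin (m + 4)))
        ∉ fanTc (m + 4) := by
      intro hmem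
      have h1 : q = m + 4 - 1 := hmem.1
      omega
    rw [heq _ hd hTc]
    have := hpos _ hd hTc
    linarith
  -- the comparison permutation
  set F : Fin (m + 4) → Fin (m + 4) := fun x => σ'.symm (σ₁ x) with hFdef
  have hFinj : Function.Injective F := fun x y hxy => σ₁.injective (σ'.symm.injective hxy)
  have hFN : F N = N := by
    rw [hFdef]
    simp only []
    rw [← hlast, Equiv.symm_apply_apply]
  have happ : ∀ x, σ' (F x) = σ₁ x := by
    intro x
    rw [hFdef]
    exact σ'.apply_symm_apply _
  have hmlt : ∀ i : ℕ, i % (m + 4) < m + 4 := fun i => Nat.mod_lt _ (by omega)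
  set g : ℕ → ℕ := fun i => (F ⟨i % (m + 4), hmlt i⟩).val with hgdef
  have hgv : ∀ i : ℕ, ∀ hi : i < m + 4, g i = (F ⟨i, hi⟩).val := by
    intro i hi
    rw [hgdef]
    exact congrArg Fin.val (congrArg F (Fin.ext (Nat.mod_eq_of_lt hi)))
  have hglt : ∀ i : ℕ, g i < m + 4 := fun i => (F _).isLt
  have hginj : ∀ i j : ℕ, i < m + 4 → j < m + 4 → g i = g j → i = j := by
    intro i j hi hj hgij
    rw [hgv i hi, hgv j hj] at hgij
    have := hFinj (Fin.ext hgij)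
    exact congrArg Fin.val this
  have hgN : g (m + 3) = m + 3 := by
    rw [hgv (m + 3) (by omega)]
    have : (⟨m + 3, by omega⟩ : Fin (m + 4)) = N := rfl
    rw [this, hFN]
  have hgtop : ∀ i : ℕ, i < m + 3 → g i < m + 3 := by
    intro i hi
    rcases Nat.lt_or_ge (g i) (m + 3) with h' | h'
    · exact h'
    · exfalso
      have hgi : g i = m + 3 := by have := hglt i; omega
      have := hginj i (m + 3) (by omega) (by omega) (hgi.trans hgN.symm)
      omega
  -- σ' at canonical points equals σ₁
  have hσ'F : ∀ i : ℕ, ∀ hi : i < m + 4,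
      σ' ⟨g i, hglt i⟩ = σ₁ ⟨i, hi⟩ := by
    intro i hi
    have e : (⟨g i, hglt i⟩ : Fin (m + 4)) = F ⟨i, hi⟩ := Fin.ext (hgv i hi)
    rw [e, happ]
  -- adjacent images must be adjacent
  have stepg : ∀ i : ℕ, i + 2 < m + 4 →
      g (i + 1) = g i + 1 ∨ g i = g (i + 1) + 1 := by
    intro i hi
    by_contra hcon
    push_neg at hcon
    obtain ⟨h1, h2⟩ := hcon
    have hne : g i ≠ g (i + 1) := by
      intro hEq
      have := hginj i (i + 1) (by omega) (by omega) hEq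
      omega
    have hitop : g i < m + 3 := hgtop i (by omega)
    have hi1top : g (i + 1) < m + 3 := hgtop (i + 1) (by omega)
    have hnn : 0 ≤ w (σ₁ ⟨i, by omega⟩) (σ₁ ⟨i + 1, by omega⟩) := nonneg σ₁ hge i hi
    rcases Nat.lt_or_ge (g i) (g (i + 1)) with hlt | hge2
    · have hneg : w (σ' ⟨g i, by omega⟩) (σ' ⟨g (i + 1), by omega⟩) < 0 :=
        neg σ' c' heqc' hc' (g i) (g (i + 1)) (by omega) (by omega)
      rw [hσ'F i (by omega), hσ'F (i + 1) (by omega)] at hneg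
      exact absurd hneg (not_lt.2 hnn)
    · have hneg : w (σ' ⟨g (i + 1), by omega⟩) (σ' ⟨g i, by omega⟩) < 0 :=
        neg σ' c' heqc' hc' (g (i + 1)) (g i) (by omega) (by omega)
      rw [hσ'F (i + 1) (by omega), hσ'F i (by omega), hsymm] at hneg
      exact absurd hneg (not_lt.2 hnn)
  -- a helper rewriting σ₂⁻¹ σ₁ through F
  have hsymm' : ∀ z, σ'.symm z = σ₂.symm z - t := by
    intro z
    apply σ'.injective
    rw [Equiv.apply_symm_apply, hσ'app]
    have : σ₂.symm z - t + t = σ₂.symm z := by ring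
    rw [this, Equiv.apply_symm_apply]
  have hkeyF : ∀ ψ : Equiv.Perm (Fin (m + 4)), (∀ x, F x = ψ x) →
      σ₂⁻¹ * σ₁ = Equiv.addRight t * ψ := by
    intro ψ hFψ
    ext x
    rw [Equiv.Perm.mul_apply, Equiv.Perm.mul_apply, Equiv.coe_addRight]
    have h1 : σ₂⁻¹ (σ₁ x) = σ₂.symm (σ₁ x) := rfl
    rw [h1]
    have h2 := hFψ x
    rw [hFdef] at h2
    simp only [] at h2
    rw [hsymm'] at h2
    have : σ₂.symm (σ₁ x) = ψ x + t := by
      have := congrArg (· + t) h2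
      simpa using this
    rw [this]
  rcases stepg 0 (by omega) with hd0 | hd0
  · -- increasing: F is the identity
    have dir : ∀ i : ℕ, i + 2 < m + 4 → g (i + 1) = g i + 1 := by
      intro i
      induction i with
      | zero => intro _; exact hd0
      | succ k ih =>
        intro hk
        have hprev := ih (by omega)
        rcases stepg (k + 1) hk with hgood | hbad
        · exact hgood
        · exfalso
          have hEq : g (k + 1 + 1) = g k := by omega
          have := hginj (k + 1 + 1) k (by omega) (by omega) hEq
          omega
    have main : ∀ i : ℕ, i + 1 < m + 4 → g i = g 0 + i := by
      intro i
      induction i with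
      | zero => intro _; omega
      | succ k ih =>
        intro hk
        have h1 := ih (by omega)
        have h2 := dir k (by omega)
        omega
    have hg00 : g 0 = 0 := by
      have h1 := main (m + 2) (by omega)
      have h2 := hgtop (m + 2) (by omega)
      omega
    have hgid : ∀ i : ℕ, i < m + 4 → g i = i := by
      intro i hi
      rcases Nat.lt_or_ge i (m + 3) with h' | h'
      · have := main i (by omega); omega
      · have hi3 : i = m + 3 := by omega
        rw [hi3]
        exact hgN
    have hFone : ∀ x : Fin (m + 4), F x = (1 : Equiv.Perm (Fin (m + 4))) x := by
      intro x
      have h1 : g x.val = (F x).val := by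
        rw [hgv x.val x.isLt]
      have h2 := hgid x.val x.isLt
      simp only [Equiv.Perm.one_apply]
      exact Fin.ext (by omega)
    have := hkeyF 1 hFone
    rw [mul_one] at this
    exact h (this ▸ addRight_mem_dihedral _ t)
  · -- decreasing: F is the reflection x ↦ -(x+2)
    have dir : ∀ i : ℕ, i + 2 < m + 4 → g i = g (i + 1) + 1 := by
      intro i
      induction i with
      | zero => intro _; exact hd0
      | succ k ih =>
        intro hk
        have hprev := ih (by omega)
        rcases stepg (k + 1) hk with hbad | hgood
        · exfalso
          have hEq : g (k + 1 + 1) = g k := by omega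
          have := hginj (k + 1 + 1) k (by omega) (by omega) hEq
          omega
        · exact hgood
    have main : ∀ i : ℕ, i + 1 < m + 4 → g i + i = g 0 := by
      intro i
      induction i with
      | zero => intro _; omega
      | succ k ih =>
        intro hk
        have h1 := ih (by omega)
        have h2 := dir k (by omega)
        omega
    have hg00 : g 0 = m + 2 := by
      have h1 := main (m + 2) (by omega)
      have h2 := hgtop 0 (by omega)
      omega
    have hgrev : ∀ i : ℕ, i < m + 3 → g i = m + 2 - i := by
      intro i hi
      have := main i (by omega)
      omega
    set ψ : Equiv.Perm (Fin (m + 4)) :=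
      Equiv.neg (Fin (m + 4)) * (Equiv.addRight (1 : Fin (m + 4))) ^ 2 with hψdef
    have hψval : ∀ x : Fin (m + 4),
        (ψ x).val = (m + 4 - (x.val + 2) % (m + 4)) % (m + 4) := by
      intro x
      rw [hψdef, Equiv.Perm.mul_apply, addRight_pow, Equiv.coe_addRight, Equiv.neg_apply,
        Fin.neg_def]
      have h2 : ((2 : ℕ) : Fin (m + 4)).val = 2 := by
        rw [Fin.val_natCast]
        exact Nat.mod_eq_of_lt (by omega)
      beta_reduce
      rw [Fin.add_def, h2]
    have hFψ : ∀ x : Fin (m + 4), F x = ψ x := by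
      intro x
      have hgx : g x.val = (F x).val := by
        rw [hgv x.val x.isLt]
      apply Fin.ext
      rw [hψval x, ← hgx]
      rcases Nat.lt_or_ge (x.val + 2) (m + 4) with hx | hx
      · -- x.val ≤ m + 1
        rw [Nat.mod_eq_of_lt hx, Nat.mod_eq_of_lt (by omega)]
        have := hgrev x.val (by omega)
        omega
      · rcases Nat.lt_or_ge x.val (m + 3) with hx3 | hx3
        · -- x.val = m + 2
          have hxv : x.val = m + 2 := by omega
          rw [hxv]
          have e1 : (m + 2 + 2) % (m + 4) = 0 := by
            have : m + 2 + 2 = m + 4 := by omega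
            rw [this, Nat.mod_self]
          rw [e1]
          have := hgrev (m + 2) (by omega)
          simp [this]
        · -- x.val = m + 3
          have hxv : x.val = m + 3 := by omega
          rw [hxv, hgN]
          have e1 : (m + 3 + 2) % (m + 4) = 1 := by
            have h5 : m + 3 + 2 = (m + 4) + 1 := by omega
            rw [h5, Nat.add_mod_left]
            exact Nat.mod_eq_of_lt (by omega)
          rw [e1]
          exact (Nat.mod_eq_of_lt (by omega)).symm
    have hkey := hkeyF ψ hFψ
    refine h (hkey ▸ mul_mem (addRight_mem_dihedral _ t) ?_)
    rw [hψdef]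
    exact mul_mem (neg_mem_dihedral _) (pow_mem (Subgroup.subset_closure (by simp)) 2)
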